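/- arXiv:1708.02323 — 2 statements merged into one kernel-verified Lean document; each statement's English description precedes it below -/
import Mathlib

section
/- There exists a directed acyclic graph D = (V, E) with two distinguished nodes s and t such that the odd path cover polyhedron P^{odd-cover-dir} := {x ∈ ℝ^E : x ≥ 0 and Σ_{e ∈ P} x_e ≥ 1 for every odd-length s→t path P in D} has an extreme point that is not half-integral, i.e., an extreme point x for which some coordinate x_e is not an integer multiple of 1/2. -/
set_option maxRecDepth 40000


/-- A (simple) directed path in the directed graph `G`, represented as a nonempty
list of pairwise distinct vertices in which every consecutive pair is an edge of `G`. -/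
def IsPath {V : Type*} (G : V → V → Prop) (p : List V) : Prop :=
  p ≠ [] ∧ p.Chain' G ∧ p.Nodup

/-- `p` is a directed path from `u` to `v` in `G`. -/
def IsPathFrom {V : Type*} (G : V → V → Prop) (u v : V) (p : List V) : Prop :=
  IsPath G p ∧ p.head? = some u ∧ p.getLast? = some v

/-- The length (number of edges) of a path, given as its list of vertices. -/
def pathLen {V : Type*} (p : List V) : ℕ := p.length - 1

/-- The list of directed edges traversed by a path. -/
def edgesOf {V : Type*} (p : List V) : List (V × V) := p.zip p.tail

/-- A directed graph is acyclic (a DAG) if no vertex lies on a directed cycle. -/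
def Acyclic {V : Type*} (G : V → V → Prop) : Prop :=
  ∀ v, ¬ Relation.TransGen G v v

/-- The graph obtained from `G` by deleting the vertex set `M`. -/
def delV {V : Type*} (G : V → V → Prop) (M : Set V) : V → V → Prop :=
  fun a b => G a b ∧ a ∉ M ∧ b ∉ M

/-- The odd path cover polyhedron `P^{odd-cover-dir}` of a DAG `D` with
distinguished vertices `s, t`, realized inside the space of all functions
`E → ℝ` on ordered pairs: coordinates on non-edges are set to `0`, all
coordinates are nonnegative, and every odd-length `s → t` path has total
weight at least `1`. -/
def oddCoverPoly {V : Type*} (D : V → V → Prop) (s t : V) :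
    Set ((V × V) → ℝ) :=
  {x | (∀ e, 0 ≤ x e) ∧ (∀ e : V × V, ¬ D e.1 e.2 → x e = 0) ∧
    ∀ p, IsPathFrom D s t p → Odd (pathLen p) →
      1 ≤ ((edgesOf p).map x).sum}

/-! ### Auxiliary construction -/

/-- The edges of our DAG. -/
def edL : List (ℕ × ℕ) :=
  [(0,2),(2,3),(3,5),(5,6),(6,8),(8,9),(9,10),(10,11),
   (0,1),(1,5),(3,4),(4,8),(6,7),(7,10),(9,11)]

def dB (a b : Fin 12) : Bool := decide ((a.val, b.val) ∈ edL)

def D12 : Fin 12 → Fin 12 → Prop := fun a b => dB a b = true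

instance : DecidableRel D12 := fun a b => inferInstanceAs (Decidable (_ = true))

/-- Boolean chain check. -/
def chB : List (Fin 12) → Bool
  | [] => true
  | [_] => true
  | a :: b :: l => dB a b && chB (b :: l)

lemma chB_iff : ∀ p : List (Fin 12), p.Chain' D12 ↔ chB p = true
  | [] => by simp [chB, List.Chain']
  | [a] => by simp [chB, List.Chain']
  | a :: b :: l => by
    rw [List.Chain', List.isChain_cons_cons]
    simp [chB, Bool.and_eq_true, ← chB_iff (b :: l), D12, List.Chain']

/-- "p is a path from v to 11". -/
def PF (v : Fin 12) (p : List (Fin 12)) : Prop :=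
  p.Chain' D12 ∧ p.head? = some v ∧ p.getLast? = some 11

lemma PF_cons {v : Fin 12} {p : List (Fin 12)} (h : PF v p) :
    p = [v] ∨ ∃ w q, p = v :: q ∧ dB v w = true ∧ PF w q := by
  obtain ⟨hc, hh, hl⟩ := h
  cases p with
  | nil => simp at hh
  | cons a q =>
    have ha : a = v := by simpa using hh
    subst ha
    cases q with
    | nil =>
      left
      simpa using hl
    | cons b r =>
      right
      refine ⟨b, b :: r, rfl, (List.isChain_cons_cons.mp hc).1, (List.isChain_cons_cons.mp hc).2, rfl, ?_⟩
      simpa [List.getLast?_cons_cons] using hl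

lemma pf11 : ∀ p, PF 11 p → p = [11] := by
  intro p h
  rcases PF_cons h with rfl | ⟨w, q, rfl, hw, hq⟩
  · rfl
  · have : ∀ u : Fin 12, dB 11 u = false := by decide
    simp [this w] at hw

lemma pf10 : ∀ p, PF 10 p → p = [10, 11] := by
  intro p h
  rcases PF_cons h with rfl | ⟨w, q, rfl, hw, hq⟩
  · exact absurd h.2.2 (by decide)
  · have hw' : w = 11 := by
      have : ∀ u : Fin 12, dB 10 u = true → u = 11 := by decide
      exact this w hw
    subst hw'
    rw [pf11 q hq]

lemma pf9 : ∀ p, PF 9 p → p = [9, 10, 11] ∨ p = [9, 11] := by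
  intro p h
  rcases PF_cons h with rfl | ⟨w, q, rfl, hw, hq⟩
  · exact absurd h.2.2 (by decide)
  · have hw' : w = 10 ∨ w = 11 := by
      have : ∀ u : Fin 12, dB 9 u = true → u = 10 ∨ u = 11 := by decide
      exact this w hw
    rcases hw' with rfl | rfl
    · rw [pf10 q hq]; left; rfl
    · rw [pf11 q hq]; right; rfl

lemma pf8 : ∀ p, PF 8 p → p = [8, 9, 10, 11] ∨ p = [8, 9, 11] := by
  intro p h
  rcases PF_cons h with rfl | ⟨w, q, rfl, hw, hq⟩
  · exact absurd h.2.2 (by decide)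
  · have hw' : w = 9 := by
      have : ∀ u : Fin 12, dB 8 u = true → u = 9 := by decide
      exact this w hw
    subst hw'
    rcases pf9 q hq with rfl | rfl
    · left; rfl
    · right; rfl

lemma pf7 : ∀ p, PF 7 p → p = [7, 10, 11] := by
  intro p h
  rcases PF_cons h with rfl | ⟨w, q, rfl, hw, hq⟩
  · exact absurd h.2.2 (by decide)
  · have hw' : w = 10 := by
      have : ∀ u : Fin 12, dB 7 u = true → u = 10 := by decide
      exact this w hw
    subst hw'
    rw [pf10 q hq]

lemma pf6 : ∀ p, PF 6 p →
    p = [6, 8, 9, 10, 11] ∨ p = [6, 8, 9, 11] ∨ p = [6, 7, 10, 11] := by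
  intro p h
  rcases PF_cons h with rfl | ⟨w, q, rfl, hw, hq⟩
  · exact absurd h.2.2 (by decide)
  · have hw' : w = 8 ∨ w = 7 := by
      have : ∀ u : Fin 12, dB 6 u = true → u = 8 ∨ u = 7 := by decide
      exact this w hw
    rcases hw' with rfl | rfl
    · rcases pf8 q hq with rfl | rfl
      · left; rfl
      · right; left; rfl
    · rw [pf7 q hq]; right; right; rfl

lemma pf5 : ∀ p, PF 5 p →
    p = [5, 6, 8, 9, 10, 11] ∨ p = [5, 6, 8, 9, 11] ∨ p = [5, 6, 7, 10, 11] := by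
  intro p h
  rcases PF_cons h with rfl | ⟨w, q, rfl, hw, hq⟩
  · exact absurd h.2.2 (by decide)
  · have hw' : w = 6 := by
      have : ∀ u : Fin 12, dB 5 u = true → u = 6 := by decide
      exact this w hw
    subst hw'
    rcases pf6 q hq with rfl | rfl | rfl
    · left; rfl
    · right; left; rfl
    · right; right; rfl

lemma pf4 : ∀ p, PF 4 p → p = [4, 8, 9, 10, 11] ∨ p = [4, 8, 9, 11] := by
  intro p h
  rcases PF_cons h with rfl | ⟨w, q, rfl, hw, hq⟩
  · exact absurd h.2.2 (by decide)
  · have hw' : w = 8 := by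
      have : ∀ u : Fin 12, dB 4 u = true → u = 8 := by decide
      exact this w hw
    subst hw'
    rcases pf8 q hq with rfl | rfl
    · left; rfl
    · right; rfl

lemma pf3 : ∀ p, PF 3 p →
    p = [3, 5, 6, 8, 9, 10, 11] ∨ p = [3, 5, 6, 8, 9, 11] ∨ p = [3, 5, 6, 7, 10, 11] ∨
    p = [3, 4, 8, 9, 10, 11] ∨ p = [3, 4, 8, 9, 11] := by
  intro p h
  rcases PF_cons h with rfl | ⟨w, q, rfl, hw, hq⟩
  · exact absurd h.2.2 (by decide)
  · have hw' : w = 5 ∨ w = 4 := by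
      have : ∀ u : Fin 12, dB 3 u = true → u = 5 ∨ u = 4 := by decide
      exact this w hw
    rcases hw' with rfl | rfl
    · rcases pf5 q hq with rfl | rfl | rfl
      · left; rfl
      · right; left; rfl
      · right; right; left; rfl
    · rcases pf4 q hq with rfl | rfl
      · right; right; right; left; rfl
      · right; right; right; right; rfl

lemma pf2 : ∀ p, PF 2 p →
    p = [2, 3, 5, 6, 8, 9, 10, 11] ∨ p = [2, 3, 5, 6, 8, 9, 11] ∨
    p = [2, 3, 5, 6, 7, 10, 11] ∨ p = [2, 3, 4, 8, 9, 10, 11] ∨ p = [2, 3, 4, 8, 9, 11] := by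
  intro p h
  rcases PF_cons h with rfl | ⟨w, q, rfl, hw, hq⟩
  · exact absurd h.2.2 (by decide)
  · have hw' : w = 3 := by
      have : ∀ u : Fin 12, dB 2 u = true → u = 3 := by decide
      exact this w hw
    subst hw'
    rcases pf3 q hq with rfl | rfl | rfl | rfl | rfl
    · left; rfl
    · right; left; rfl
    · right; right; left; rfl
    · right; right; right; left; rfl
    · right; right; right; right; rfl

lemma pf1 : ∀ p, PF 1 p →
    p = [1, 5, 6, 8, 9, 10, 11] ∨ p = [1, 5, 6, 8, 9, 11] ∨ p = [1, 5, 6, 7, 10, 11] := by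
  intro p h
  rcases PF_cons h with rfl | ⟨w, q, rfl, hw, hq⟩
  · exact absurd h.2.2 (by decide)
  · have hw' : w = 5 := by
      have : ∀ u : Fin 12, dB 1 u = true → u = 5 := by decide
      exact this w hw
    subst hw'
    rcases pf5 q hq with rfl | rfl | rfl
    · left; rfl
    · right; left; rfl
    · right; right; rfl

lemma pf0 : ∀ p, PF 0 p →
    p = [0, 2, 3, 5, 6, 8, 9, 10, 11] ∨ p = [0, 2, 3, 5, 6, 8, 9, 11] ∨
    p = [0, 2, 3, 5, 6, 7, 10, 11] ∨ p = [0, 2, 3, 4, 8, 9, 10, 11] ∨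
    p = [0, 2, 3, 4, 8, 9, 11] ∨ p = [0, 1, 5, 6, 8, 9, 10, 11] ∨
    p = [0, 1, 5, 6, 8, 9, 11] ∨ p = [0, 1, 5, 6, 7, 10, 11] := by
  intro p h
  rcases PF_cons h with rfl | ⟨w, q, rfl, hw, hq⟩
  · exact absurd h.2.2 (by decide)
  · have hw' : w = 2 ∨ w = 1 := by
      have : ∀ u : Fin 12, dB 0 u = true → u = 2 ∨ u = 1 := by decide
      exact this w hw
    rcases hw' with rfl | rfl
    · rcases pf2 q hq with rfl | rfl | rfl | rfl | rfl
      · left; rfl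
      · right; left; rfl
      · right; right; left; rfl
      · right; right; right; left; rfl
      · right; right; right; right; left; rfl
    · rcases pf1 q hq with rfl | rfl | rfl
      · right; right; right; right; right; left; rfl
      · right; right; right; right; right; right; left; rfl
      · right; right; right; right; right; right; right; rfl

/-- The special edges, carrying value `1/3`. -/
def spb (e : Fin 12 × Fin 12) : Bool :=
  decide ((e.1.val, e.2.val) ∈ [(2,3),(5,6),(8,9),(10,11)])

noncomputable def xv : Fin 12 × Fin 12 → ℝ := fun e => if spb e then 1/3 else 0

lemma xv_spec : ∀ e, spb e = true → xv e = 1/3 := by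
  intro e h; simp [xv, h]

lemma xv_zero : ∀ e, spb e = false → xv e = 0 := by
  intro e h; simp [xv, h]

/-- **(Theorem: the odd path cover polyhedron of a DAG need not be
half-integral.)**  There is a DAG `D` with vertices `s, t` such that
`P^{odd-cover-dir}` has an extreme point `x` (i.e. `x = (y + z)/2` with
`y, z ∈ P` forces `y = z = x`) some coordinate of which (on an actual edge of
`D`) is not an integer multiple of `1/2`. -/
theorem oddCoverPoly_not_half_integral :
    ∃ (n : ℕ) (D : Fin n → Fin n → Prop) (s t : Fin n), Acyclic D ∧
      ∃ x ∈ oddCoverPoly D s t,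
        (∀ y ∈ oddCoverPoly D s t, ∀ z ∈ oddCoverPoly D s t,
          (∀ e, x e = (y e + z e) / 2) → y = x ∧ z = x) ∧
        ∃ e : Fin n × Fin n, D e.1 e.2 ∧ ∀ m : ℤ, x e ≠ (m : ℝ) / 2 := by
  refine ⟨12, D12, 0, 11, ?_, xv, ?_, ?_, ?_⟩
  · -- acyclicity
    intro v hv
    have hlt : ∀ a b : Fin 12, D12 a b → a < b := by decide
    have key : ∀ a b : Fin 12, Relation.TransGen D12 a b → a < b := by
      intro a b h
      induction h with
      | single h => exact hlt _ _ h
      | tail _ h ih => exact lt_trans ih (hlt _ _ h)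
    exact lt_irrefl v (key v v hv)
  · -- membership
    refine ⟨?_, ?_, ?_⟩
    · intro e
      dsimp only [xv]
      split <;> norm_num
    · intro e he
      have himp : ∀ e : Fin 12 × Fin 12, spb e = true → dB e.1 e.2 = true := by decide
      apply xv_zero
      cases h : spb e with
      | false => rfl
      | true => exact absurd (himp e h) he
    · intro p hp hodd
      have hPF : PF 0 p := ⟨hp.1.2.1, hp.2.1, hp.2.2⟩
      rcases pf0 p hPF with rfl | rfl | rfl | rfl | rfl | rfl | rfl | rfl
      · exact absurd hodd (by decide)
      · simp only [edgesOf, List.zip, List.tail, List.zipWith, List.map, List.sum_cons,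
          List.sum_nil]
        rw [xv_zero (0,2) (by decide),
          xv_spec (2,3) (by decide),
          xv_zero (3,5) (by decide),
          xv_spec (5,6) (by decide),
          xv_zero (6,8) (by decide),
          xv_spec (8,9) (by decide),
          xv_zero (9,11) (by decide)]
        norm_num
      · simp only [edgesOf, List.zip, List.tail, List.zipWith, List.map, List.sum_cons,
          List.sum_nil]
        rw [xv_zero (0,2) (by decide),
          xv_spec (2,3) (by decide),
          xv_zero (3,5) (by decide),
          xv_spec (5,6) (by decide),
          xv_zero (6,7) (by decide),
          xv_zero (7,10) (by decide),
          xv_spec (10,11) (by decide)]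
        norm_num
      · simp only [edgesOf, List.zip, List.tail, List.zipWith, List.map, List.sum_cons,
          List.sum_nil]
        rw [xv_zero (0,2) (by decide),
          xv_spec (2,3) (by decide),
          xv_zero (3,4) (by decide),
          xv_zero (4,8) (by decide),
          xv_spec (8,9) (by decide),
          xv_zero (9,10) (by decide),
          xv_spec (10,11) (by decide)]
        norm_num
      · exact absurd hodd (by decide)
      · simp only [edgesOf, List.zip, List.tail, List.zipWith, List.map, List.sum_cons,
          List.sum_nil]
        rw [xv_zero (0,1) (by decide),
          xv_zero (1,5) (by decide),
          xv_spec (5,6) (by decide),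
          xv_zero (6,8) (by decide),
          xv_spec (8,9) (by decide),
          xv_zero (9,10) (by decide),
          xv_spec (10,11) (by decide)]
        norm_num
      · exact absurd hodd (by decide)
      · exact absurd hodd (by decide)
  · -- extreme point
    intro y hy z hz hxyz
    have hy0 : ∀ e, spb e = false → y e = 0 := by
      intro e h
      have h1 := hxyz e
      rw [xv_zero e h] at h1
      have := hy.1 e; have := hz.1 e
      linarith
    have hz0 : ∀ e, spb e = false → z e = 0 := by
      intro e h
      have h1 := hxyz e
      rw [xv_zero e h] at h1
      have := hy.1 e; have := hz.1 e
      linarith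
    -- the four tight odd paths
    have mkP : ∀ p : List (Fin 12), p ≠ [] → chB p = true → p.Nodup →
        p.head? = some 0 → p.getLast? = some 11 → IsPathFrom D12 0 11 p := by
      intro p h1 h2 h3 h4 h5
      exact ⟨⟨h1, (chB_iff p).mpr h2, h3⟩, h4, h5⟩
    have hP1 := hy.2.2 [0, 1, 5, 6, 8, 9, 10, 11]
      (mkP _ (by simp) (by decide) (by decide) rfl rfl) (by decide)
    have hP2 := hy.2.2 [0, 2, 3, 4, 8, 9, 10, 11]
      (mkP _ (by simp) (by decide) (by decide) rfl rfl) (by decide)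
    have hP3 := hy.2.2 [0, 2, 3, 5, 6, 7, 10, 11]
      (mkP _ (by simp) (by decide) (by decide) rfl rfl) (by decide)
    have hP4 := hy.2.2 [0, 2, 3, 5, 6, 8, 9, 11]
      (mkP _ (by simp) (by decide) (by decide) rfl rfl) (by decide)
    have hQ1 := hz.2.2 [0, 1, 5, 6, 8, 9, 10, 11]
      (mkP _ (by simp) (by decide) (by decide) rfl rfl) (by decide)
    have hQ2 := hz.2.2 [0, 2, 3, 4, 8, 9, 10, 11]
      (mkP _ (by simp) (by decide) (by decide) rfl rfl) (by decide)
    have hQ3 := hz.2.2 [0, 2, 3, 5, 6, 7, 10, 11]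
      (mkP _ (by simp) (by decide) (by decide) rfl rfl) (by decide)
    have hQ4 := hz.2.2 [0, 2, 3, 5, 6, 8, 9, 11]
      (mkP _ (by simp) (by decide) (by decide) rfl rfl) (by decide)
    simp only [edgesOf, List.zip, List.tail, List.zipWith, List.map, List.sum_cons,
      List.sum_nil] at hP1 hP2 hP3 hP4 hQ1 hQ2 hQ3 hQ4
    rw [hy0 (0,1) (by decide), hy0 (1,5) (by decide), hy0 (6,8) (by decide), hy0 (9,10) (by decide)] at hP1
    rw [hy0 (0,2) (by decide), hy0 (3,4) (by decide), hy0 (4,8) (by decide), hy0 (9,10) (by decide)] at hP2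
    rw [hy0 (0,2) (by decide), hy0 (3,5) (by decide), hy0 (6,7) (by decide), hy0 (7,10) (by decide)] at hP3
    rw [hy0 (0,2) (by decide), hy0 (3,5) (by decide), hy0 (6,8) (by decide), hy0 (9,11) (by decide)] at hP4
    rw [hz0 (0,1) (by decide), hz0 (1,5) (by decide), hz0 (6,8) (by decide), hz0 (9,10) (by decide)] at hQ1
    rw [hz0 (0,2) (by decide), hz0 (3,4) (by decide), hz0 (4,8) (by decide), hz0 (9,10) (by decide)] at hQ2
    rw [hz0 (0,2) (by decide), hz0 (3,5) (by decide), hz0 (6,7) (by decide), hz0 (7,10) (by decide)] at hQ3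
    rw [hz0 (0,2) (by decide), hz0 (3,5) (by decide), hz0 (6,8) (by decide), hz0 (9,11) (by decide)] at hQ4
    have ha := hxyz ((2 : Fin 12), (3 : Fin 12))
    have hb := hxyz ((5 : Fin 12), (6 : Fin 12))
    have hc := hxyz ((8 : Fin 12), (9 : Fin 12))
    have hd := hxyz ((10 : Fin 12), (11 : Fin 12))
    rw [xv_spec _ (by decide)] at ha hb hc hd
    constructor
    · funext e
      cases h : spb e with
      | false => rw [hy0 e h, xv_zero e h]
      | true =>
        have hmem : e = ((2 : Fin 12), (3 : Fin 12)) ∨ e = (5, 6) ∨ e = (8, 9) ∨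
            e = (10, 11) := by
          have : ∀ u : Fin 12 × Fin 12, spb u = true →
              u = ((2 : Fin 12), (3 : Fin 12)) ∨ u = (5, 6) ∨ u = (8, 9) ∨ u = (10, 11) := by
            decide
          exact this e h
        rw [xv_spec e h]
        rcases hmem with rfl | rfl | rfl | rfl <;> linarith
    · funext e
      cases h : spb e with
      | false => rw [hz0 e h, xv_zero e h]
      | true =>
        have hmem : e = ((2 : Fin 12), (3 : Fin 12)) ∨ e = (5, 6) ∨ e = (8, 9) ∨
            e = (10, 11) := by
          have : ∀ u : Fin 12 × Fin 12, spb u = true →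
              u = ((2 : Fin 12), (3 : Fin 12)) ∨ u = (5, 6) ∨ u = (8, 9) ∨ u = (10, 11) := by
            decide
          exact this e h
        rw [xv_spec e h]
        rcases hmem with rfl | rfl | rfl | rfl <;> linarith
  · -- non-half-integral coordinate
    refine ⟨((2 : Fin 12), (3 : Fin 12)), by decide, ?_⟩
    intro m hm
    rw [xv_spec _ (by decide)] at hm
    have h3 : (m : ℝ) = 2 / 3 := by linarith
    have h6 : (3 * m : ℝ) = 2 := by linarith
    have : (3 * m : ℤ) = 2 := by exact_mod_cast h6
    omega
end

section
/- For every integer k ≥ 2 there exists an undirected graph G with distinguished nodes s, t ∈ V(G) such that: (a) there exists x : E(G) → ℝ with x ≥ 0 satisfying Σ_{e ∈ P} x(e) ≥ 1 for every odd-length s–t path P in G and with total value Σ_{e ∈ E(G)} x(e) ≤ k/2; and (b) every set F ⊆ E(G) that intersects every odd-length s–t path in G satisfies |F| ≥ k − 1. Consequently, the integrality gap of the odd path blocker LP for undirected graphs is at least 2 − 2/k. -/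
namespace OPBAux

abbrev N (k : ℕ) : ℕ := 4*k+2

def vS (k : ℕ) : Fin (N k) := ⟨0, by unfold N; omega⟩
def vT (k : ℕ) : Fin (N k) := ⟨1, by unfold N; omega⟩
def vA (k i : ℕ) (h : i < k) : Fin (N k) := ⟨2+i, by unfold N; omega⟩
def vB (k i : ℕ) (h : i < k) : Fin (N k) := ⟨2+k+i, by unfold N; omega⟩
def vX (k l : ℕ) (h : l < k) : Fin (N k) := ⟨2+2*k+2*l, by unfold N; omega⟩
def vY (k l : ℕ) (h : l < k) : Fin (N k) := ⟨3+2*k+2*l, by unfold N; omega⟩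

def r (k : ℕ) (u v : Fin (N k)) : Prop :=
  (u.1 = 0 ∧ 2 ≤ v.1 ∧ v.1 < 2+k) ∨
  (u.1 = 1 ∧ 2 ≤ v.1 ∧ v.1 < 2+k) ∨
  (2 ≤ u.1 ∧ u.1 < 2+k ∧ v.1 = u.1 + k) ∨
  (2+k ≤ u.1 ∧ 2+k ≤ v.1)

def G (k : ℕ) : SimpleGraph (Fin (N k)) := SimpleGraph.fromRel (r k)

def SpB (k : ℕ) : Sym2 (Fin (N k)) → Bool :=
  Sym2.lift ⟨fun u v => (decide (u.1 < 2+k) && decide (2+k ≤ v.1)) ||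
      (decide (v.1 < 2+k) && decide (2+k ≤ u.1)), fun _ _ => Bool.or_comm _ _⟩

noncomputable def xf (k : ℕ) : Sym2 (Fin (N k)) → ℝ :=
  fun e => if SpB k e then (1:ℝ)/2 else 0

def sd (k : ℕ) (u : Fin (N k)) : ℕ := if 2+k ≤ u.1 then 1 else 0
def ps (k : ℕ) (u : Fin (N k)) : ℕ := if 2 ≤ u.1 then 1 else 0

lemma spB_mk {k : ℕ} (u v : Fin (N k)) :
    SpB k s(u,v) = true ↔ (u.1 < 2+k ∧ 2+k ≤ v.1 ∨ v.1 < 2+k ∧ 2+k ≤ u.1) := by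
  simp [SpB]

lemma spB_sd {k : ℕ} (u v : Fin (N k)) :
    SpB k s(u,v) = true ↔ sd k u ≠ sd k v := by
  rw [spB_mk]; unfold sd; split_ifs <;> omega

lemma sd01 {k : ℕ} (u : Fin (N k)) : sd k u = 0 ∨ sd k u = 1 := by
  unfold sd; split_ifs <;> simp

lemma parityA {k : ℕ} {u v : Fin (N k)} (w : (G k).Walk u v) :
    (w.edges.countP (SpB k)) % 2 = (sd k u + sd k v) % 2 := by
  induction w with
  | nil => rename_i w; rcases sd01 (k := k) w with h | h <;> simp [h]
  | @cons a b c h p ih =>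
    rw [SimpleGraph.Walk.edges_cons, List.countP_cons]
    have ha := sd01 (k := k) a
    have hb := sd01 (k := k) b
    have hc := sd01 (k := k) c
    by_cases hs : SpB k s(a,b) = true
    · have hne := (spB_sd (k := k) a b).mp hs
      simp only [hs, if_true]
      omega
    · have heq : sd k a = sd k b := not_ne_iff.mp (fun hne => hs ((spB_sd _ _).mpr hne))
      simp only [Bool.not_eq_true] at hs
      simp only [hs, Bool.false_eq_true, if_false]
      omega

lemma parityB {k : ℕ} {u v : Fin (N k)} (w : (G k).Walk u v)
    (hno : ∀ e ∈ w.edges, ¬ SpB k e = true) (hu : u.1 < 2+k) :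
    v.1 < 2+k ∧ w.length % 2 = (ps k u + ps k v) % 2 := by
  induction w with
  | nil =>
    rename_i w
    refine ⟨hu, ?_⟩
    rcases show ps k w = 0 ∨ ps k w = 1 by unfold ps; split_ifs <;> simp with h | h <;>
      simp [h]
  | @cons a b c h p ih =>
    have hsp : ¬ SpB k s(a,b) = true := hno _ (by simp)
    have hb : b.1 < 2+k := by
      by_contra hb
      exact hsp ((spB_mk a b).mpr (Or.inl ⟨hu, by omega⟩))
    obtain ⟨hc, hlen⟩ := ih (fun e he => hno e (by simp [he])) hb
    refine ⟨hc, ?_⟩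
    have hone : ps k a + ps k b = 1 := by
      rw [G, SimpleGraph.fromRel_adj] at h
      rcases h.2 with h2 | h2 <;> rcases h2 with h3 | h3 | h3 | h3 <;>
        unfold ps <;> split_ifs <;> omega
    simp only [SimpleGraph.Walk.length_cons]
    have hpa : ps k a = 0 ∨ ps k a = 1 := by unfold ps; split_ifs <;> simp
    have hpc : ps k c = 0 ∨ ps k c = 1 := by unfold ps; split_ifs <;> simp
    omega

lemma two_specials {k : ℕ} (hk : 2 ≤ k) (p : (G k).Walk (vS k) (vT k))
    (ho : Odd p.length) : 2 ≤ p.edges.countP (SpB k) := by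
  have hA := parityA p
  have hsS : sd k (vS k) = 0 := by simp [sd, vS]
  have hsT : sd k (vT k) = 0 := by simp [sd, vT]; omega
  rw [hsS, hsT] at hA
  by_contra hlt
  have hc0 : p.edges.countP (SpB k) = 0 := by omega
  have hno : ∀ e ∈ p.edges, ¬ SpB k e = true := by
    rw [← List.countP_eq_zero]; exact hc0
  have hB := parityB p hno (by simp only [vS]; omega)
  have h1 : ps k (vS k) = 0 := by simp [ps, vS]
  have h2 : ps k (vT k) = 0 := by simp [ps, vT]
  rw [Nat.odd_iff] at ho
  omega

lemma xf_nonneg (k : ℕ) (e : Sym2 (Fin (N k))) : 0 ≤ xf k e := by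
  unfold xf; split_ifs <;> norm_num

lemma sum_ge_one {k : ℕ} (hk : 2 ≤ k) (p : (G k).Walk (vS k) (vT k))
    (ho : Odd p.length) : 1 ≤ (p.edges.map (xf k)).sum := by
  classical
  set l' := p.edges.filter (SpB k) with hl'
  have hlen : 2 ≤ l'.length := by
    rw [hl', ← List.countP_eq_length_filter]
    exact two_specials hk p ho
  have hsub : (l'.map (xf k)).Sublist (p.edges.map (xf k)) :=
    (List.filter_sublist).map _
  have hle : (l'.map (xf k)).sum ≤ (p.edges.map (xf k)).sum := by
    refine List.Sublist.sum_le_sum hsub ?_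
    intro a ha
    obtain ⟨e, _, rfl⟩ := List.mem_map.mp ha
    exact xf_nonneg k e
  have hconst : ∀ b ∈ l'.map (xf k), b = (1:ℝ)/2 := by
    intro b hb
    obtain ⟨e, he, rfl⟩ := List.mem_map.mp hb
    have : SpB k e = true := (List.mem_filter.mp he).2
    simp [xf, this]
  have hrep := List.eq_replicate_of_mem hconst
  have hsum : (l'.map (xf k)).sum = (l'.length : ℝ) * (1/2) := by
    rw [hrep]
    simp [List.sum_replicate, List.length_map, nsmul_eq_mul]
  have : (1:ℝ) ≤ (l'.map (xf k)).sum := by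
    rw [hsum]
    have h2 : (2:ℝ) ≤ (l'.length : ℝ) := by exact_mod_cast hlen
    linarith
  linarith

lemma total_le {k : ℕ} (hk : 2 ≤ k) :
    (∑ᶠ e ∈ (G k).edgeSet, xf k e) ≤ (k : ℝ) / 2 := by
  classical
  have hfin : (G k).edgeSet.Finite := Set.toFinite _
  rw [← Set.Finite.coe_toFinset hfin, finsum_mem_coe_finset]
  set T := hfin.toFinset with hT
  have hsum : ∑ e ∈ T, xf k e = ∑ e ∈ T.filter (fun e => SpB k e = true), (1:ℝ)/2 := by
    rw [Finset.sum_filter]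
    apply Finset.sum_congr rfl
    intro e _
    by_cases h : SpB k e = true <;> simp [xf, h]
  have hcard : (T.filter (fun e => SpB k e = true)).card ≤ k := by
    have hsub : T.filter (fun e => SpB k e = true) ⊆
        (Finset.univ : Finset (Fin k)).image
          (fun i => s(vA k i.1 i.2, vB k i.1 i.2)) := by
      intro e he
      obtain ⟨heE, heS⟩ := Finset.mem_filter.mp he
      rw [hT, Set.Finite.mem_toFinset] at heE
      induction e using Sym2.ind with
      | _ u v =>
        rw [SimpleGraph.mem_edgeSet, G, SimpleGraph.fromRel_adj] at heE
        rw [spB_mk] at heS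
        rcases heE.2 with h2 | h2 <;> rcases h2 with h3 | h3 | h3 | h3 <;>
          [skip; skip; skip; skip; skip; skip; skip; skip]
        case' inl.inr.inr.inl =>
          refine Finset.mem_image.mpr ⟨⟨u.1 - 2, by omega⟩, Finset.mem_univ _, ?_⟩
          rw [Sym2.eq_iff]; left
          constructor <;> (apply Fin.ext; simp [vA, vB]; omega)
        case' inr.inr.inr.inl =>
          refine Finset.mem_image.mpr ⟨⟨v.1 - 2, by omega⟩, Finset.mem_univ _, ?_⟩
          rw [Sym2.eq_iff]; right
          constructor <;> (apply Fin.ext; simp [vA, vB]; omega)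
        all_goals omega
    calc (T.filter _).card ≤ _ := Finset.card_le_card hsub
      _ ≤ (Finset.univ : Finset (Fin k)).card := Finset.card_image_le
      _ = k := by simp
  rw [hsum, Finset.sum_const, nsmul_eq_mul]
  have : ((T.filter (fun e => SpB k e = true)).card : ℝ) ≤ (k : ℝ) := by exact_mod_cast hcard
  linarith

lemma adj_SA {k i : ℕ} (h : i < k) : (G k).Adj (vS k) (vA k i h) := by
  rw [G, SimpleGraph.fromRel_adj]
  refine ⟨fun hh => ?_, Or.inl (Or.inl ⟨by simp [vS], ?_, ?_⟩)⟩
  · have := congrArg Fin.val hh; simp [vS, vA] at this; omega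
  · simp [vA]
  · simp [vA]; omega

lemma adj_AT {k i : ℕ} (h : i < k) : (G k).Adj (vA k i h) (vT k) := by
  rw [G, SimpleGraph.fromRel_adj]
  refine ⟨fun hh => ?_, Or.inr (Or.inr (Or.inl ⟨by simp [vT], ?_, ?_⟩))⟩
  · have := congrArg Fin.val hh; simp [vT, vA] at this; omega
  · simp [vA]
  · simp [vA]; omega

lemma adj_AB {k i : ℕ} (h : i < k) : (G k).Adj (vA k i h) (vB k i h) := by
  rw [G, SimpleGraph.fromRel_adj]
  refine ⟨fun hh => ?_, Or.inl (Or.inr (Or.inr (Or.inl ⟨?_, ?_, ?_⟩)))⟩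
  · have := congrArg Fin.val hh; simp [vB, vA] at this; omega
  · simp [vA]
  · simp [vA]; omega
  · simp [vA, vB]; omega

lemma adj_hub {k : ℕ} {u v : Fin (N k)} (hu : 2+k ≤ u.1) (hv : 2+k ≤ v.1)
    (hne : u ≠ v) : (G k).Adj u v := by
  rw [G, SimpleGraph.fromRel_adj]
  exact ⟨hne, Or.inl (Or.inr (Or.inr (Or.inr ⟨hu, hv⟩)))⟩

lemma path5 {k i j : ℕ} (hi : i < k) (hj : j < k) (hij : i ≠ j) :
    ∃ p : (G k).Walk (vS k) (vT k), p.IsPath ∧ Odd p.length ∧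
      p.edges = [s(vS k, vA k i hi), s(vA k i hi, vB k i hi),
        s(vB k i hi, vB k j hj), s(vB k j hj, vA k j hj), s(vA k j hj, vT k)] := by
  have hBB : (G k).Adj (vB k i hi) (vB k j hj) := by
    refine adj_hub (by simp [vB]) (by simp [vB]) (fun hh => ?_)
    have := congrArg Fin.val hh; simp [vB] at this; omega
  refine ⟨.cons (adj_SA hi) (.cons (adj_AB hi) (.cons hBB
    (.cons ((adj_AB hj).symm) (.cons (adj_AT hj) .nil)))), ?_, ?_, ?_⟩
  · rw [SimpleGraph.Walk.isPath_def]
    simp only [SimpleGraph.Walk.support_cons, SimpleGraph.Walk.support_nil]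
    simp [List.nodup_cons, vS, vT, vA, vB, Fin.ext_iff]
    omega
  · simp only [SimpleGraph.Walk.length_cons, SimpleGraph.Walk.length_nil]
    decide
  · simp [SimpleGraph.Walk.edges_cons]

lemma path7 {k i j l : ℕ} (hi : i < k) (hj : j < k) (hij : i ≠ j) (hl : l < k) :
    ∃ p : (G k).Walk (vS k) (vT k), p.IsPath ∧ Odd p.length ∧
      p.edges = [s(vS k, vA k i hi), s(vA k i hi, vB k i hi),
        s(vB k i hi, vX k l hl), s(vX k l hl, vY k l hl), s(vY k l hl, vB k j hj),
        s(vB k j hj, vA k j hj), s(vA k j hj, vT k)] := by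
  have hBX : (G k).Adj (vB k i hi) (vX k l hl) := by
    refine adj_hub (by simp [vB]) (by simp only [vX]; omega) (fun hh => ?_)
    have := congrArg Fin.val hh; simp only [vB, vX, Fin.mk.injEq] at this; omega
  have hXY : (G k).Adj (vX k l hl) (vY k l hl) := by
    refine adj_hub (by simp only [vX]; omega) (by simp only [vY]; omega) (fun hh => ?_)
    have := congrArg Fin.val hh; simp only [vX, vY, Fin.mk.injEq] at this; omega
  have hYB : (G k).Adj (vY k l hl) (vB k j hj) := by
    refine adj_hub (by simp only [vY]; omega) (by simp [vB]) (fun hh => ?_)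
    have := congrArg Fin.val hh; simp only [vB, vY, Fin.mk.injEq] at this; omega
  refine ⟨.cons (adj_SA hi) (.cons (adj_AB hi) (.cons hBX (.cons hXY (.cons hYB
    (.cons ((adj_AB hj).symm) (.cons (adj_AT hj) .nil)))))), ?_, ?_, ?_⟩
  · rw [SimpleGraph.Walk.isPath_def]
    simp only [SimpleGraph.Walk.support_cons, SimpleGraph.Walk.support_nil]
    simp [List.nodup_cons, vS, vT, vA, vB, vX, vY, Fin.ext_iff]
    omega
  · simp only [SimpleGraph.Walk.length_cons, SimpleGraph.Walk.length_nil]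
    decide
  · simp [SimpleGraph.Walk.edges_cons]

def eS (k : ℕ) (i : Fin k) : Sym2 (Fin (N k)) := s(vS k, vA k i.1 i.2)
def eT (k : ℕ) (i : Fin k) : Sym2 (Fin (N k)) := s(vA k i.1 i.2, vT k)
def eH (k : ℕ) (i : Fin k) : Sym2 (Fin (N k)) := s(vA k i.1 i.2, vB k i.1 i.2)

lemma blocker_ge {k : ℕ} (hk : 2 ≤ k) (F : Set (Sym2 (Fin (N k))))
    (hFhit : ∀ p : (G k).Walk (vS k) (vT k), p.IsPath → Odd p.length →
      ∃ e ∈ F, e ∈ p.edges) : k - 1 ≤ F.ncard := by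
  classical
  by_contra hcard
  have hFfin : F.Finite := Set.toFinite F
  set Fs : Finset (Sym2 (Fin (N k))) := hFfin.toFinset with hFs
  have hcard' : Fs.card ≤ k - 2 := by
    have hh : F.ncard = Fs.card := Set.ncard_eq_toFinset_card F hFfin
    omega
  -- killed indices
  set killed : Finset (Fin k) :=
    Finset.univ.filter (fun i => eS k i ∈ F ∨ eT k i ∈ F ∨ eH k i ∈ F) with hkilled
  have hkcard : killed.card ≤ Fs.card := by
    apply Finset.card_le_card_of_injOn
      (fun i => if eS k i ∈ F then eS k i else if eT k i ∈ F then eT k i else eH k i)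
    · intro i hi
      rw [hkilled, Finset.mem_coe, Finset.mem_filter] at hi
      beta_reduce
      split_ifs with h1 h2
      · rwa [hFs, Finset.mem_coe, Set.Finite.mem_toFinset]
      · rwa [hFs, Finset.mem_coe, Set.Finite.mem_toFinset]
      · rw [hFs, Finset.mem_coe, Set.Finite.mem_toFinset]
        rcases hi.2 with h | h | h
        · exact absurd h h1
        · exact absurd h h2
        · exact h
    · intro i _ j _ heq
      have hi2 := i.2; have hj2 := j.2
      simp only at heq
      split_ifs at heq <;>
        (simp only [eS, eT, eH, Sym2.eq_iff, vS, vT, vA, vB, Fin.mk.injEq] at heq;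
         exact Fin.ext (by omega))
  have halive : 1 < (Finset.univ \ killed).card := by
    have h1 : (Finset.univ \ killed).card = k - killed.card := by
      rw [Finset.card_sdiff_of_subset (Finset.subset_univ _), Finset.card_univ, Fintype.card_fin]
    omega
  obtain ⟨i, hi, j, hj, hij⟩ := Finset.one_lt_card.mp halive
  have hijv : i.1 ≠ j.1 := fun h => hij (Fin.ext h)
  rw [Finset.mem_sdiff, hkilled, Finset.mem_filter, not_and] at hi hj
  have hi' := hi.2 (Finset.mem_univ _); have hj' := hj.2 (Finset.mem_univ _)
  push_neg at hi' hj'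
  obtain ⟨hiS, hiT, hiH⟩ := hi'
  obtain ⟨hjS, hjT, hjH⟩ := hj'
  -- segments
  set segL : Fin (k-1) → List (Sym2 (Fin (N k))) := fun l =>
    if h0 : l.1 = 0 then [s(vB k i.1 i.2, vB k j.1 j.2)]
    else [s(vB k i.1 i.2, vX k (l.1-1) (by have := l.2; omega)),
          s(vX k (l.1-1) (by have := l.2; omega), vY k (l.1-1) (by have := l.2; omega)),
          s(vY k (l.1-1) (by have := l.2; omega), vB k j.1 j.2)] with hsegL
  have hfree : ∃ l : Fin (k-1), ∀ e ∈ segL l, e ∉ F := by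
    by_contra hno
    push_neg at hno
    choose φ hmem hφF using hno
    have hinj : Set.InjOn φ (Finset.univ : Finset (Fin (k-1))) := by
      intro l _ l' _ heq
      have hi2 := i.2; have hj2 := j.2
      have hl2 := l.2; have hl2' := l'.2
      have hm := hmem l; have hm' := hmem l'
      simp only [hsegL] at hm hm'
      by_cases h0 : l.1 = 0 <;> by_cases h0' : l'.1 = 0
      · exact Fin.ext (by omega)
      · rw [dif_pos h0] at hm
        rw [dif_neg h0'] at hm'
        simp only [List.mem_cons, List.not_mem_nil, or_false] at hm hm'
        rcases hm' with h2 | h2 | h2 <;>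
          (rw [hm, h2, Sym2.eq_iff] at heq;
           simp only [vB, vX, vY, Fin.mk.injEq] at heq;
           exact Fin.ext (by omega))
      · rw [dif_neg h0] at hm
        rw [dif_pos h0'] at hm'
        simp only [List.mem_cons, List.not_mem_nil, or_false] at hm hm'
        rcases hm with h1 | h1 | h1 <;>
          (rw [h1, hm', Sym2.eq_iff] at heq;
           simp only [vB, vX, vY, Fin.mk.injEq] at heq;
           exact Fin.ext (by omega))
      · rw [dif_neg h0] at hm
        rw [dif_neg h0'] at hm'
        simp only [List.mem_cons, List.not_mem_nil, or_false] at hm hm'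
        rcases hm with h1 | h1 | h1 <;> rcases hm' with h2 | h2 | h2 <;>
          (rw [h1, h2, Sym2.eq_iff] at heq;
           simp only [vB, vX, vY, Fin.mk.injEq] at heq;
           exact Fin.ext (by omega))
    have hle : (Finset.univ : Finset (Fin (k-1))).card ≤ Fs.card := by
      apply Finset.card_le_card_of_injOn φ
      · intro l _
        rw [hFs, Finset.mem_coe, Set.Finite.mem_toFinset]
        exact hφF l
      · exact hinj
    rw [Finset.card_univ, Fintype.card_fin] at hle
    omega
  obtain ⟨l, hlfree⟩ := hfree
  by_cases h0 : l.1 = 0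
  · obtain ⟨p, hp, hodd, hedges⟩ := path5 (k := k) i.2 j.2 hijv
    obtain ⟨e, heF, hep⟩ := hFhit p hp hodd
    rw [hedges] at hep
    simp only [List.mem_cons, List.not_mem_nil, or_false] at hep
    rcases hep with rfl | rfl | rfl | rfl | rfl
    · exact hiS heF
    · exact hiH heF
    · exact hlfree _ (by simp [hsegL, dif_pos h0]) heF
    · exact hjH (by rwa [Sym2.eq_swap] at heF)
    · exact hjT heF
  · obtain ⟨p, hp, hodd, hedges⟩ :=
      path7 (k := k) (l := l.1 - 1) i.2 j.2 hijv (by have := l.2; omega)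
    obtain ⟨e, heF, hep⟩ := hFhit p hp hodd
    rw [hedges] at hep
    simp only [List.mem_cons, List.not_mem_nil, or_false] at hep
    rcases hep with rfl | rfl | rfl | rfl | rfl | rfl | rfl
    · exact hiS heF
    · exact hiH heF
    · exact hlfree _ (by simp [hsegL, dif_neg h0]) heF
    · exact hlfree _ (by simp [hsegL, dif_neg h0]) heF
    · exact hlfree _ (by simp [hsegL, dif_neg h0]) heF
    · exact hjH (by rwa [Sym2.eq_swap] at heF)
    · exact hjT heF

end OPBAux

/-- **(Integrality gap of the odd path blocker LP in undirected graphs,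
Lemma 4.2.)**  For every integer `k ≥ 2` there is an undirected graph `G`
with distinguished vertices `s, t` such that:
(a) there is a nonnegative fractional solution `x` of the odd path blocker LP
(every odd-length `s – t` path has total `x`-weight at least `1`) of total
value at most `k / 2`; and
(b) every set `F ⊆ E(G)` of edges intersecting every odd-length `s – t` path
of `G` has `|F| ≥ k − 1`.
Consequently the integrality gap of the LP is at least `2 − 2/k`. -/
theorem odd_path_blocker_LP_integrality_gap (k : ℕ) (hk : 2 ≤ k) :
    ∃ (n : ℕ) (G : SimpleGraph (Fin n)) (s t : Fin n),
      (∃ x : Sym2 (Fin n) → ℝ, (∀ e, 0 ≤ x e) ∧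
        (∀ p : G.Walk s t, p.IsPath → Odd p.length →
          1 ≤ (p.edges.map x).sum) ∧
        (∑ᶠ e ∈ G.edgeSet, x e) ≤ (k : ℝ) / 2) ∧
      (∀ F : Set (Sym2 (Fin n)), F ⊆ G.edgeSet →
        (∀ p : G.Walk s t, p.IsPath → Odd p.length → ∃ e ∈ F, e ∈ p.edges) →
        k - 1 ≤ F.ncard) := by
  refine ⟨OPBAux.N k, OPBAux.G k, OPBAux.vS k, OPBAux.vT k,
    ⟨OPBAux.xf k, OPBAux.xf_nonneg k, ?_, OPBAux.total_le hk⟩, ?_⟩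
  · intro p hp ho
    exact OPBAux.sum_ge_one hk p ho
  · intro F _ hFhit
    exact OPBAux.blocker_ge hk F hFhit
end
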